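/- Let X ⊂ ℝ^d be compact with vol(X) > 0. Any point sequence generated by the greedy-packing algorithm is MR-optimal: its uniformity constant sup_{n≥2} MR(X_n) equals 2, and this is the minimum possible uniformity constant over all point sequences in X. -/

import Mathlib

open Metric Set MeasureTheory

/-- Distance from a point `x` to the nearest point of the design `D`. -/
noncomputable def minDist {E : Type*} [NormedAddCommGroup E] (D : Finset E) (x : E) : ℝ :=
  sInf ((fun p => dist x p) '' (D : Set E))

/-- Fill distance (covering radius) of the design `D` for the set `A`:
`CR_A(D) = sup_{x ∈ A} min_{p ∈ D} ‖x - p‖`. -/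
noncomputable def fillDist {E : Type*} [NormedAddCommGroup E] (A : Set E) (D : Finset E) : ℝ :=
  sSup ((fun x => minDist D x) '' A)

/-- Separation radius of the design `D`:
`SR(D) = (1/2) min_{p ≠ q ∈ D} ‖p - q‖`. -/
noncomputable def sepRad {E : Type*} [NormedAddCommGroup E] (D : Finset E) : ℝ :=
  (1 / 2) * sInf ((fun p : E × E => dist p.1 p.2) '' {p | p.1 ∈ D ∧ p.2 ∈ D ∧ p.1 ≠ p.2})

/-- Mesh-ratio of the design `D` for the set `A`: `MR(D) = CR_A(D) / SR(D)`. -/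
noncomputable def meshRatio {E : Type*} [NormedAddCommGroup E] (A : Set E) (D : Finset E) : ℝ :=
  fillDist A D / sepRad D

/-- The nested design consisting of the first `n` points of the sequence `x`. -/
noncomputable def design {E : Type*} (x : ℕ → E) (n : ℕ) : Finset E :=
  letI := Classical.decEq E
  (Finset.range n).image x

section helpers
variable {E : Type*} [NormedAddCommGroup E]

lemma mem_design {x : ℕ → E} {n : ℕ} {p : E} : p ∈ design x n ↔ ∃ i < n, x i = p := by
  simp [design, Finset.mem_image]

lemma design_mono {x : ℕ → E} {m n : ℕ} (h : m ≤ n) : design x m ⊆ design x n := by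
  intro p hp
  rcases mem_design.1 hp with ⟨i, hi, rfl⟩
  exact mem_design.2 ⟨i, lt_of_lt_of_le hi h, rfl⟩

lemma minDist_nonneg (D : Finset E) (x : E) : 0 ≤ minDist D x :=
  Real.sInf_nonneg (by rintro r ⟨p, _, rfl⟩; exact dist_nonneg)

lemma minDist_le {D : Finset E} {p : E} (x : E) (hp : p ∈ D) : minDist D x ≤ dist x p :=
  csInf_le ⟨0, by rintro r ⟨q, _, rfl⟩; exact dist_nonneg⟩ ⟨p, by simpa using hp, rfl⟩

lemma exists_minDist {D : Finset E} (hD : D.Nonempty) (x : E) :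
    ∃ p ∈ D, minDist D x = dist x p := by
  have hfin : ((fun p => dist x p) '' (D : Set E)).Finite := D.finite_toSet.image _
  have hne : ((fun p => dist x p) '' (D : Set E)).Nonempty := by
    exact ⟨dist x hD.choose, hD.choose, by simpa using hD.choose_spec, rfl⟩
  have := hne.csInf_mem hfin
  rcases this with ⟨p, hp, hval⟩
  exact ⟨p, by simpa using hp, hval.symm⟩

lemma minDist_anti {D D' : Finset E} (h : D ⊆ D') (hD : D.Nonempty) (x : E) :
    minDist D' x ≤ minDist D x := by
  rcases exists_minDist hD x with ⟨p, hp, hval⟩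
  rw [hval]; exact minDist_le x (h hp)

lemma bddAbove_minDist_image {S : Set E} (hS : Bornology.IsBounded S) {D : Finset E}
    (hD : D.Nonempty) : BddAbove ((fun x => minDist D x) '' S) := by
  rcases hD with ⟨p, hp⟩
  rcases (hS.subset_closedBall p) with ⟨R, hR⟩
  refine ⟨R, ?_⟩
  rintro r ⟨z, hz, rfl⟩
  exact le_trans (minDist_le z hp) (by simpa [dist_comm] using hR hz)

lemma le_fillDist {S : Set E} (hS : Bornology.IsBounded S) {D : Finset E}
    (hD : D.Nonempty) {z : E} (hz : z ∈ S) : minDist D z ≤ fillDist S D :=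
  le_csSup (bddAbove_minDist_image hS hD) ⟨z, hz, rfl⟩

lemma fillDist_nonneg {S : Set E} (hS : Bornology.IsBounded S) (hne : S.Nonempty)
    {D : Finset E} (hD : D.Nonempty) : 0 ≤ fillDist S D := by
  rcases hne with ⟨z, hz⟩
  exact le_trans (minDist_nonneg D z) (le_fillDist hS hD hz)

lemma fillDist_anti {S : Set E} (hS : Bornology.IsBounded S) (hne : S.Nonempty)
    {D D' : Finset E} (hD : D.Nonempty) (h : D ⊆ D') : fillDist S D' ≤ fillDist S D := by
  apply csSup_le (hne.image _)
  rintro r ⟨z, hz, rfl⟩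
  exact le_trans (minDist_anti h hD z) (le_fillDist hS hD hz)

lemma sepRad_nonneg (D : Finset E) : 0 ≤ sepRad D := by
  have : 0 ≤ sInf ((fun p : E × E => dist p.1 p.2) '' {p | p.1 ∈ D ∧ p.2 ∈ D ∧ p.1 ≠ p.2}) :=
    Real.sInf_nonneg (by rintro r ⟨p, _, rfl⟩; exact dist_nonneg)
  unfold sepRad; linarith

lemma sepRad_le {D : Finset E} {p q : E} (hp : p ∈ D) (hq : q ∈ D) (hne : p ≠ q) :
    sepRad D ≤ dist p q / 2 := by
  have : sInf ((fun p : E × E => dist p.1 p.2) '' {p | p.1 ∈ D ∧ p.2 ∈ D ∧ p.1 ≠ p.2})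
      ≤ dist p q :=
    csInf_le ⟨0, by rintro r ⟨u, _, rfl⟩; exact dist_nonneg⟩ ⟨(p, q), ⟨hp, hq, hne⟩, rfl⟩
  unfold sepRad; linarith

lemma pairSet_finite (D : Finset E) :
    ((fun p : E × E => dist p.1 p.2) '' {p | p.1 ∈ D ∧ p.2 ∈ D ∧ p.1 ≠ p.2}).Finite := by
  apply Set.Finite.image
  apply Set.Finite.subset (Set.Finite.prod D.finite_toSet D.finite_toSet)
  rintro ⟨a, b⟩ ⟨ha, hb, _⟩
  exact ⟨ha, hb⟩

lemma sepRad_pos {D : Finset E} {p q : E} (hp : p ∈ D) (hq : q ∈ D) (hne : p ≠ q) :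
    0 < sepRad D := by
  set s := (fun p : E × E => dist p.1 p.2) '' {p | p.1 ∈ D ∧ p.2 ∈ D ∧ p.1 ≠ p.2} with hs
  have hneS : s.Nonempty := ⟨dist p q, (p, q), ⟨hp, hq, hne⟩, rfl⟩
  have hmem := hneS.csInf_mem (pairSet_finite D)
  rcases hmem with ⟨u, ⟨hu1, hu2, hu3⟩, hval⟩
  have : 0 < sInf s := by rw [← hval]; exact dist_pos.2 hu3
  unfold sepRad; rw [← hs]; linarith

lemma le_sepRad {D : Finset E} {p0 q0 : E} (hp0 : p0 ∈ D) (hq0 : q0 ∈ D) (hne0 : p0 ≠ q0)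
    {c : ℝ} (hc : ∀ p q : E, p ∈ D → q ∈ D → p ≠ q → c ≤ dist p q) :
    c / 2 ≤ sepRad D := by
  have : c ≤ sInf ((fun p : E × E => dist p.1 p.2) '' {p | p.1 ∈ D ∧ p.2 ∈ D ∧ p.1 ≠ p.2}) := by
    have hmem : dist p0 q0 ∈ ((fun p : E × E => dist p.1 p.2) ''
        {p | p.1 ∈ D ∧ p.2 ∈ D ∧ p.1 ≠ p.2}) := ⟨(p0, q0), ⟨hp0, hq0, hne0⟩, rfl⟩
    apply le_csInf ⟨_, hmem⟩
    rintro r ⟨⟨a, b⟩, ⟨ha, hb, hab⟩, rfl⟩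
    exact hc a b ha hb hab
  unfold sepRad; linarith

end helpers

/-- Let `S ⊆ ℝ^d` be compact with `vol(S) > 0`. Any point sequence generated
by the greedy-packing algorithm is MR-optimal: its uniformity constant `sup_{n ≥ 2} MR(Xₙ)`
equals 2 (it is an upper bound, and no smaller bound works), and 2 is the minimum possible
uniformity constant over all point sequences in `S`. -/
theorem statement9 {d : ℕ} (hd : 1 ≤ d)
    {E : Type*} [NormedAddCommGroup E] [NormedSpace ℝ E] [FiniteDimensional ℝ E]
    [MeasurableSpace E] [BorelSpace E] (hdim : Module.finrank ℝ E = d)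
    (S : Set E) (hS : IsCompact S) (hvol : 0 < (Measure.addHaar : Measure E) S)
    (x : ℕ → E) (hinj : Function.Injective x) (hx0 : x 0 ∈ S)
    (hgreedy : ∀ k : ℕ, 1 ≤ k →
      x k ∈ S ∧ minDist (design x k) (x k) = fillDist S (design x k)) :
    (∀ n : ℕ, 2 ≤ n → meshRatio S (design x n) ≤ 2) ∧
    (∀ b : ℝ, (∀ n : ℕ, 2 ≤ n → meshRatio S (design x n) ≤ b) → 2 ≤ b) ∧
    (∀ y : ℕ → E, Function.Injective y → (∀ k, y k ∈ S) →
      ∀ b : ℝ, (∀ n : ℕ, 2 ≤ n → meshRatio S (design y n) ≤ b) → 2 ≤ b) := by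
  have hSb : Bornology.IsBounded S := hS.isBounded
  have hSne : S.Nonempty := by
    rcases S.eq_empty_or_nonempty with h | h
    · rw [h] at hvol; simp at hvol
    · exact h
  set μ : Measure E := Measure.addHaar with hμ
  -- Part 3 (and 2): any injective sequence in S has uniformity constant ≥ 2.
  have part3 : ∀ y : ℕ → E, Function.Injective y → (∀ k, y k ∈ S) →
      ∀ b : ℝ, (∀ n : ℕ, 2 ≤ n → meshRatio S (design y n) ≤ b) → 2 ≤ b := by
    intro y hyinj hyS b hb
    by_contra hb2
    push_neg at hb2
    -- basic facts
    have hdes_ne : ∀ n : ℕ, 1 ≤ n → (design y n).Nonempty :=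
      fun n hn => ⟨y 0, mem_design.2 ⟨0, hn, rfl⟩⟩
    have hy01 : y 0 ≠ y 1 := fun h => absurd (hyinj h) (by norm_num)
    have hmem2 : ∀ n : ℕ, 2 ≤ n → y 0 ∈ design y n ∧ y 1 ∈ design y n := by
      intro n hn
      exact ⟨mem_design.2 ⟨0, by omega, rfl⟩, mem_design.2 ⟨1, by omega, rfl⟩⟩
    have hbnonneg : 0 ≤ b := by
      have h2 := hb 2 le_rfl
      have hfill : 0 ≤ fillDist S (design y 2) := fillDist_nonneg hSb hSne (hdes_ne 2 (by norm_num))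
      have hsep : 0 ≤ sepRad (design y 2) := sepRad_nonneg _
      exact le_trans (div_nonneg hfill hsep) h2
    set q : ℝ := b / 2 with hq
    have hq0 : 0 ≤ q := by positivity
    have hq1 : q < 1 := by simp only [hq]; linarith
    -- geometric decay of fill distance
    have key : ∀ n : ℕ, 1 ≤ n →
        fillDist S (design y (n + 1)) ≤ q * fillDist S (design y n) := by
      intro n hn
      have hsep_pos : 0 < sepRad (design y (n + 1)) := by
        rcases hmem2 (n + 1) (by omega) with ⟨h0, h1⟩
        exact sepRad_pos h0 h1 hy01
      have hMR := hb (n + 1) (by omega)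
      have hfill_le : fillDist S (design y (n + 1)) ≤ b * sepRad (design y (n + 1)) := by
        rw [meshRatio, div_le_iff₀ hsep_pos] at hMR
        linarith [hMR]
      rcases exists_minDist (hdes_ne n hn) (y n) with ⟨p, hp, hval⟩
      rcases mem_design.1 hp with ⟨i, hi, rfl⟩
      have hne : y i ≠ y n := fun h => absurd (hyinj h) (by omega)
      have hsep_le : sepRad (design y (n + 1)) ≤ dist (y i) (y n) / 2 :=
        sepRad_le (mem_design.2 ⟨i, by omega, rfl⟩) (mem_design.2 ⟨n, by omega, rfl⟩) hne
      have hmd_le : minDist (design y n) (y n) ≤ fillDist S (design y n) :=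
        le_fillDist hSb (hdes_ne n hn) (hyS n)
      have : dist (y i) (y n) = minDist (design y n) (y n) := by rw [hval, dist_comm]
      nlinarith [hsep_le, hmd_le, hfill_le, hsep_pos]
    set F : ℝ := fillDist S (design y 1) with hF
    have hF0 : 0 ≤ F := fillDist_nonneg hSb hSne (hdes_ne 1 le_rfl)
    have decay : ∀ n : ℕ, fillDist S (design y (n + 1)) ≤ q ^ n * F := by
      intro n
      induction n with
      | zero => simp [hF]
      | succ m ih =>
        calc fillDist S (design y (m + 1 + 1)) ≤ q * fillDist S (design y (m + 1)) :=
              key (m + 1) (by omega)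
          _ ≤ q * (q ^ m * F) := by
              apply mul_le_mul_of_nonneg_left ih hq0
          _ = q ^ (m + 1) * F := by ring
    -- covering bound
    have hfill_nonneg : ∀ n : ℕ, 1 ≤ n → 0 ≤ fillDist S (design y n) :=
      fun n hn => fillDist_nonneg hSb hSne (hdes_ne n hn)
    have cover : ∀ n : ℕ, 1 ≤ n →
        S ⊆ ⋃ i ∈ Finset.range n, closedBall (y i) (fillDist S (design y n)) := by
      intro n hn z hz
      rcases exists_minDist (hdes_ne n hn) z with ⟨p, hp, hval⟩
      rcases mem_design.1 hp with ⟨i, hi, rfl⟩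
      have : dist z (y i) ≤ fillDist S (design y n) := by
        rw [← hval]; exact le_fillDist hSb (hdes_ne n hn) hz
      exact Set.mem_biUnion (Finset.mem_range.2 hi) (mem_closedBall.2 this)
    set B : ENNReal := μ (closedBall (0 : E) 1) with hB
    have hBfin : B ≠ ⊤ := measure_closedBall_lt_top.ne
    have measbound : ∀ n : ℕ, 1 ≤ n →
        μ S ≤ ENNReal.ofReal ((n : ℝ) * fillDist S (design y n) ^ d) * B := by
      intro n hn
      calc μ S ≤ μ (⋃ i ∈ Finset.range n, closedBall (y i) (fillDist S (design y n))) :=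
            measure_mono (cover n hn)
        _ ≤ ∑ i ∈ Finset.range n, μ (closedBall (y i) (fillDist S (design y n))) :=
            measure_biUnion_finset_le _ _
        _ = ∑ i ∈ Finset.range n,
              ENNReal.ofReal (fillDist S (design y n) ^ d) * B := by
            apply Finset.sum_congr rfl
            intro i _
            rw [hB, hμ, Measure.addHaar_closedBall' _ _ (hfill_nonneg n hn), hdim]
        _ = (n : ENNReal) * (ENNReal.ofReal (fillDist S (design y n) ^ d) * B) := by
            rw [Finset.sum_const, Finset.card_range]; simp [nsmul_eq_mul]
        _ = ENNReal.ofReal ((n : ℝ) * fillDist S (design y n) ^ d) * B := by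
            rw [ENNReal.ofReal_mul (by positivity)]
            simp [mul_assoc, ENNReal.ofReal_natCast]
    -- the real sequence bounding n * fill^d
    set Q : ℝ := q ^ d with hQ
    have hQ0 : 0 ≤ Q := by positivity
    have hQ1 : Q < 1 := by
      rw [hQ]
      calc q ^ d ≤ q ^ 1 := pow_le_pow_of_le_one hq0 hq1.le hd
        _ = q := pow_one q
        _ < 1 := hq1
    set g : ℕ → ℝ := fun n => ((n : ℝ) + 1) * Q ^ n * F ^ d with hg
    have hgsum : Summable g := by
      have h1 : Summable (fun n : ℕ => (n : ℝ) ^ 1 * Q ^ n) :=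
        summable_pow_mul_geometric_of_norm_lt_one 1 (by rwa [Real.norm_eq_abs, abs_of_nonneg hQ0])
      have h2 : Summable (fun n : ℕ => Q ^ n) := summable_geometric_of_lt_one hQ0 hQ1
      have h3 : Summable (fun n : ℕ => ((n : ℝ) + 1) * Q ^ n) := by
        have := (h1.add h2)
        exact (this.mul_right 1).congr (fun n => by ring)
      have := h3.mul_right (F ^ d)
      apply this.congr
      intro n; simp [hg, mul_assoc]
    have hgto : Filter.Tendsto g Filter.atTop (nhds 0) := hgsum.tendsto_atTop_zero
    have hto : Filter.Tendsto (fun n => ENNReal.ofReal (g n) * B) Filter.atTop (nhds 0) := by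
      have h1 : Filter.Tendsto (fun n => ENNReal.ofReal (g n)) Filter.atTop (nhds 0) := by
        have := (ENNReal.tendsto_ofReal hgto)
        simpa using this
      have := ENNReal.Tendsto.mul_const h1 (Or.inr hBfin)
      simpa using this
    have hev := hto.eventually_lt_const hvol
    rcases hev.exists with ⟨n, hn⟩
    -- contradiction at index n+1
    have hb1 : μ S ≤ ENNReal.ofReal (((n + 1 : ℕ) : ℝ) * fillDist S (design y (n + 1)) ^ d) * B :=
      measbound (n + 1) (by omega)
    have hle : ((n + 1 : ℕ) : ℝ) * fillDist S (design y (n + 1)) ^ d ≤ g n := by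
      have h1 : fillDist S (design y (n + 1)) ^ d ≤ (q ^ n * F) ^ d :=
        pow_le_pow_left₀ (hfill_nonneg (n + 1) (by omega)) (decay n) d
      have h2 : (q ^ n * F) ^ d = Q ^ n * F ^ d := by
        rw [hQ, mul_pow, ← pow_mul, ← pow_mul, Nat.mul_comm]
      have h3 : ((n + 1 : ℕ) : ℝ) = (n : ℝ) + 1 := by push_cast; ring
      rw [hg]
      calc ((n + 1 : ℕ) : ℝ) * fillDist S (design y (n + 1)) ^ d
          ≤ ((n : ℝ) + 1) * (Q ^ n * F ^ d) := by
            rw [← h3, ← h2]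
            exact mul_le_mul_of_nonneg_left h1 (by positivity)
        _ = ((n : ℝ) + 1) * Q ^ n * F ^ d := by ring
    have : μ S ≤ ENNReal.ofReal (g n) * B :=
      le_trans hb1 (mul_le_mul_left (ENNReal.ofReal_le_ofReal hle) B)
    exact absurd (lt_of_le_of_lt this hn) (lt_irrefl _)
  -- Part 1: greedy gives mesh ratio ≤ 2
  have hxS : ∀ k, x k ∈ S := by
    intro k
    rcases Nat.eq_zero_or_pos k with rfl | hk
    · exact hx0
    · exact (hgreedy k hk).1
  have part1 : ∀ n : ℕ, 2 ≤ n → meshRatio S (design x n) ≤ 2 := by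
    intro n hn
    have hdes_ne : ∀ m : ℕ, 1 ≤ m → (design x m).Nonempty :=
      fun m hm => ⟨x 0, mem_design.2 ⟨0, hm, rfl⟩⟩
    have hx01 : x 0 ≠ x 1 := fun h => absurd (hinj h) (by norm_num)
    have h0 : x 0 ∈ design x n := mem_design.2 ⟨0, by omega, rfl⟩
    have h1 : x 1 ∈ design x n := mem_design.2 ⟨1, by omega, rfl⟩
    have hsep_pos : 0 < sepRad (design x n) := sepRad_pos h0 h1 hx01
    -- each pair distance is at least fillDist S (design x n)
    have hpair : ∀ i j : ℕ, i < j → j < n →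
        fillDist S (design x n) ≤ dist (x i) (x j) := by
      intro i j hij hjn
      have hj1 : 1 ≤ j := by omega
      have hg := (hgreedy j hj1).2
      have hxi : x i ∈ design x j := mem_design.2 ⟨i, hij, rfl⟩
      have h1 : fillDist S (design x n) ≤ fillDist S (design x j) :=
        fillDist_anti hSb hSne (hdes_ne j hj1) (design_mono (le_of_lt hjn))
      have h2 : fillDist S (design x j) = minDist (design x j) (x j) := hg.symm
      have h3 : minDist (design x j) (x j) ≤ dist (x j) (x i) := minDist_le _ hxi
      rw [dist_comm] at h3
      linarith
    have hc : ∀ p q : E, p ∈ design x n → q ∈ design x n → p ≠ q →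
        fillDist S (design x n) ≤ dist p q := by
      intro p q hp hq hne
      rcases mem_design.1 hp with ⟨i, hi, rfl⟩
      rcases mem_design.1 hq with ⟨j, hj, rfl⟩
      have hij : i ≠ j := fun h => hne (by rw [h])
      rcases lt_or_gt_of_ne hij with h | h
      · exact hpair i j h hj
      · rw [dist_comm]; exact hpair j i h hi
    have hsep : fillDist S (design x n) / 2 ≤ sepRad (design x n) :=
      le_sepRad h0 h1 hx01 hc
    rw [meshRatio, div_le_iff₀ hsep_pos]
    linarith
  exact ⟨part1, fun b hb => part3 x hinj hxS b hb, part3⟩
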